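/- Let X be a vector space with a complete invariant metric d satisfying d(λx, λy) ≤ λ d(x,y) for λ ∈ [0,1), and let f : [a,b] → X. If sup d(0, Σᵢ (f(dᵢ) − f(cᵢ))) < ∞, where the supremum is over all finite collections {[cᵢ, dᵢ]} of nonoverlapping subintervals of [a,b], then f is Riemann integrable on [a,b]. -/

import Mathlib

open Set MeasureTheory

/-- A tagged partition of `[a,b]`: points `a = t 0 < t 1 < ⋯ < t n = b`
with tags `s i ∈ [t i, t (i+1)]`. -/
structure TaggedPartition (a b : ℝ) where
  n : ℕ
  t : ℕ → ℝ
  s : ℕ → ℝ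
  npos : 0 < n
  left : t 0 = a
  right : t n = b
  mono : ∀ i < n, t i < t (i + 1)
  tag_mem : ∀ i < n, s i ∈ Set.Icc (t i) (t (i + 1))

/-- The mesh of the partition is `< δ`. -/
def TaggedPartition.MeshLT {a b : ℝ} (P : TaggedPartition a b) (δ : ℝ) : Prop :=
  ∀ i < P.n, P.t (i + 1) - P.t i < δ

/-- The set of partition points of a tagged partition. -/
def TaggedPartition.points {a b : ℝ} (P : TaggedPartition a b) : Set ℝ :=
  {x | ∃ i ≤ P.n, P.t i = x}

/-- The Riemann sum `f(Δ) = Σᵢ (tᵢ₊₁ - tᵢ) • f(sᵢ)`. -/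
def riemannSum {X : Type*} [AddCommGroup X] [Module ℝ X]
    (f : ℝ → X) {a b : ℝ} (P : TaggedPartition a b) : X :=
  ∑ i ∈ Finset.range P.n, (P.t (i + 1) - P.t i) • f (P.s i)

/-- `f` has Riemann integral `x` on `[a,b]` (mesh-based definition, metric `dist`). -/
def HasRiemannIntegral {X : Type*} [MetricSpace X] [AddCommGroup X] [Module ℝ X]
    (f : ℝ → X) (a b : ℝ) (x : X) : Prop :=
  ∀ ε > 0, ∃ δ > 0, ∀ P : TaggedPartition a b, P.MeshLT δ →
    dist (riemannSum f P) x < ε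

set_option linter.unusedSectionVars false
open Finset


open Finset

section NormLemmas
variable {X : Type*} [MetricSpace X] [AddCommGroup X] [Module ℝ X]

lemma N_dist_eq (hinv : ∀ x y z : X, dist (x + z) (y + z) = dist x y) (x y : X) :
    dist x y = dist (x - y) 0 := by
  have := hinv x y (-y)
  simpa [sub_eq_add_neg] using this.symm

lemma N_add_le (hinv : ∀ x y z : X, dist (x + z) (y + z) = dist x y) (x y : X) :
    dist (x + y) 0 ≤ dist x 0 + dist y 0 := by
  have h1 : dist (x + y) y = dist x 0 := by
    have := hinv x 0 y; simpa using this
  calc dist (x + y) 0 ≤ dist (x + y) y + dist y 0 := dist_triangle _ _ _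
    _ = dist x 0 + dist y 0 := by rw [h1]

lemma N_neg (hinv : ∀ x y z : X, dist (x + z) (y + z) = dist x y) (x : X) :
    dist (-x) 0 = dist x 0 := by
  have := hinv (-x) 0 x
  simpa [dist_comm] using this.symm

lemma N_sub_le (hinv : ∀ x y z : X, dist (x + z) (y + z) = dist x y) (x y : X) :
    dist (x - y) 0 ≤ dist x 0 + dist y 0 := by
  have := N_add_le hinv x (-y)
  simpa [sub_eq_add_neg, N_neg hinv] using this

lemma N_smul_le
    (hscale : ∀ l : ℝ, 0 ≤ l → l < 1 → ∀ x y : X, dist (l • x) (l • y) ≤ l * dist x y)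
    {l : ℝ} (h0 : 0 ≤ l) (h1 : l < 1) (x : X) :
    dist (l • x) 0 ≤ l * dist x 0 := by
  have := hscale l h0 h1 x 0
  simpa using this

/-- Key convexity-type lemma: if all subset sums of `v` have `N ≤ L` and weights lie
in `[0,1]`, then the weighted sum has `N ≤ L`. -/
lemma lemB (hinv : ∀ x y z : X, dist (x + z) (y + z) = dist x y)
    (hscale : ∀ l : ℝ, 0 ≤ l → l < 1 → ∀ x y : X, dist (l • x) (l • y) ≤ l * dist x y)
    {ι : Type*} [DecidableEq ι] (L : ℝ) (hL0 : 0 ≤ L) (v : ι → X) :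
    ∀ (s : Finset ι) (w : ι → ℝ),
    (∀ t ⊆ s, dist (∑ i ∈ t, v i) 0 ≤ L) →
    (∀ i ∈ s, 0 ≤ w i ∧ w i ≤ 1) →
    dist (∑ i ∈ s, w i • v i) 0 ≤ L := by
  intro s
  obtain ⟨n, hn⟩ : ∃ n, s.card = n := ⟨_, rfl⟩
  induction n generalizing s with
  | zero =>
    intro w _ _
    rw [Finset.card_eq_zero] at hn
    simpa [hn] using hL0
  | succ n ih =>
    intro w hsub hw
    have hne : s.Nonempty := by
      rw [← Finset.card_pos, hn]; omega
    obtain ⟨j, hj, hjmin⟩ := Finset.exists_min_image s w hne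
    set μ := w j with hμ
    have hμ0 : 0 ≤ μ := (hw j hj).1
    have hμ1 : μ ≤ 1 := (hw j hj).2
    have hcard : (s.erase j).card = n := by
      rw [Finset.card_erase_of_mem hj, hn]; omega
    rcases eq_or_lt_of_le hμ1 with hμeq | hμlt
    · -- μ = 1 : all weights are 1
      have hall : ∀ i ∈ s, w i = 1 := fun i hi =>
        le_antisymm (hw i hi).2 (hμeq ▸ hjmin i hi)
      have : ∑ i ∈ s, w i • v i = ∑ i ∈ s, v i :=
        Finset.sum_congr rfl fun i hi => by rw [hall i hi, one_smul]
      rw [this]; exact hsub s subset_rfl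
    rcases eq_or_lt_of_le hμ0 with hμ0eq | hμpos
    · -- μ = 0 : drop the j-th term
      have hz : w j • v j = 0 := by rw [← hμ, ← hμ0eq, zero_smul]
      rw [← Finset.sum_erase s hz]
      exact ih (s.erase j) hcard w
        (fun t ht => hsub t (ht.trans (Finset.erase_subset _ _)))
        (fun i hi => hw i (Finset.mem_of_mem_erase hi))
    · -- 0 < μ < 1
      set g : ι → ℝ := fun i => (w i - μ) / (1 - μ) with hg
      have h1μ : (0:ℝ) < 1 - μ := by linarith
      have key : ∑ i ∈ s, w i • v i
          = μ • (∑ i ∈ s, v i) + (1 - μ) • (∑ i ∈ s.erase j, g i • v i) := by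
        rw [Finset.smul_sum, Finset.smul_sum]
        have h2 : ∀ i, (1 - μ) • (g i • v i) = (w i - μ) • v i := by
          intro i
          rw [smul_smul, hg]
          congr 1
          field_simp
        simp only [h2]
        have hz : (w j - μ) • v j = 0 := by rw [← hμ, sub_self, zero_smul]
        rw [Finset.sum_erase s hz, ← Finset.sum_add_distrib]
        refine Finset.sum_congr rfl fun i hi => ?_
        rw [← add_smul]
        ring_nf
      rw [key]
      have t1 : dist (μ • (∑ i ∈ s, v i)) 0 ≤ μ * L := by
        calc dist (μ • (∑ i ∈ s, v i)) 0 ≤ μ * dist (∑ i ∈ s, v i) 0 :=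
              N_smul_le hscale hμ0 hμlt _
          _ ≤ μ * L := mul_le_mul_of_nonneg_left (hsub s subset_rfl) hμ0
      have t2 : dist ((1 - μ) • (∑ i ∈ s.erase j, g i • v i)) 0 ≤ (1 - μ) * L := by
        have hin : dist (∑ i ∈ s.erase j, g i • v i) 0 ≤ L := by
          refine ih (s.erase j) hcard g
            (fun t ht => hsub t (ht.trans (Finset.erase_subset _ _))) ?_
          intro i hi
          have hi' := Finset.mem_of_mem_erase hi
          constructor
          · exact div_nonneg (by linarith [hjmin i hi']) h1μ.le
          · rw [div_le_one h1μ]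
            linarith [(hw i hi').2]
        calc dist ((1 - μ) • (∑ i ∈ s.erase j, g i • v i)) 0
            ≤ (1 - μ) * dist (∑ i ∈ s.erase j, g i • v i) 0 :=
              N_smul_le hscale h1μ.le (by linarith) _
          _ ≤ (1 - μ) * L := mul_le_mul_of_nonneg_left hin h1μ.le
      calc dist (μ • (∑ i ∈ s, v i) + (1 - μ) • (∑ i ∈ s.erase j, g i • v i)) 0
          ≤ μ * L + (1 - μ) * L := le_trans (N_add_le hinv _ _) (add_le_add t1 t2)
        _ = L := by ring

end NormLemmas

section IntervalBound
variable {X : Type*} [MetricSpace X] [AddCommGroup X] [Module ℝ X]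

/-- Subset sums of increments over nonoverlapping nondegenerate-or-trivial intervals
are bounded by `L`. -/
lemma lemC0 {a b : ℝ} {f : ℝ → X} {L : ℝ}
    (hL : ∀ (m : ℕ) (c d : Fin m → ℝ),
      (∀ i, a ≤ c i ∧ c i < d i ∧ d i ≤ b) →
      (∀ i j, i ≠ j → d i ≤ c j ∨ d j ≤ c i) →
      dist 0 (∑ i, (f (d i) - f (c i))) ≤ L)
    {ι : Type*} (t : Finset ι) (p q : ι → ℝ)
    (hpq : ∀ i ∈ t, a ≤ p i ∧ p i ≤ q i ∧ q i ≤ b)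
    (hno : ∀ i ∈ t, ∀ j ∈ t, i ≠ j → q i ≤ p j ∨ q j ≤ p i) :
    dist (∑ i ∈ t, (f (q i) - f (p i))) 0 ≤ L := by
  classical
  set t' := t.filter (fun i => p i < q i) with ht'
  have hsum : ∑ i ∈ t, (f (q i) - f (p i)) = ∑ i ∈ t', (f (q i) - f (p i)) := by
    rw [ht']
    refine (Finset.sum_filter_of_ne ?_).symm
    intro i hi hne
    by_contra h
    push_neg at h
    have : p i = q i := le_antisymm (hpq i hi).2.1 h
    exact hne (by rw [this, sub_self])
  rw [hsum]
  set e := t'.equivFin with he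
  set c : Fin t'.card → ℝ := fun k => p ((e.symm k) : ι) with hc
  set d : Fin t'.card → ℝ := fun k => q ((e.symm k) : ι) with hd
  have hmem : ∀ k, ((e.symm k : t') : ι) ∈ t' := fun k => (e.symm k).2
  have hmem' : ∀ k, ((e.symm k : t') : ι) ∈ t := fun k =>
    Finset.mem_of_mem_filter _ (hmem k)
  have hlt : ∀ k, p ((e.symm k : t') : ι) < q ((e.symm k : t') : ι) := fun k =>
    (Finset.mem_filter.mp (hmem k)).2
  have h1 : ∀ k, a ≤ c k ∧ c k < d k ∧ d k ≤ b := by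
    intro k
    exact ⟨(hpq _ (hmem' k)).1, hlt k, (hpq _ (hmem' k)).2.2⟩
  have h2 : ∀ k l, k ≠ l → d k ≤ c l ∨ d l ≤ c k := by
    intro k l hkl
    have : ((e.symm k : t') : ι) ≠ ((e.symm l : t') : ι) := by
      intro h
      exact hkl (by simpa using e.symm.injective (Subtype.ext h))
    exact hno _ (hmem' k) _ (hmem' l) this
  have := hL t'.card c d h1 h2
  rw [dist_comm] at this
  have heq : ∑ k, (f (d k) - f (c k)) = ∑ i ∈ t', (f (q i) - f (p i)) := by
    rw [hc, hd]
    rw [← Finset.sum_attach t' (fun i => f (q i) - f (p i))]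
    exact Equiv.sum_comp e.symm (fun i : t' => f (q (i:ι)) - f (p (i:ι)))
  rwa [heq] at this

/-- Weighted increments over nonoverlapping intervals with weights bounded by `δ < 1`. -/
lemma lemC (hinv : ∀ x y z : X, dist (x + z) (y + z) = dist x y)
    (hscale : ∀ l : ℝ, 0 ≤ l → l < 1 → ∀ x y : X, dist (l • x) (l • y) ≤ l * dist x y)
    {a b : ℝ} {f : ℝ → X} {L : ℝ} (hL0 : 0 ≤ L)
    (hL : ∀ (m : ℕ) (c d : Fin m → ℝ),
      (∀ i, a ≤ c i ∧ c i < d i ∧ d i ≤ b) →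
      (∀ i j, i ≠ j → d i ≤ c j ∨ d j ≤ c i) →
      dist 0 (∑ i, (f (d i) - f (c i))) ≤ L)
    {ι : Type*} [DecidableEq ι] (s : Finset ι) (p q ω : ι → ℝ) {δ : ℝ}
    (hδ0 : 0 < δ) (hδ1 : δ < 1)
    (hpq : ∀ i ∈ s, a ≤ p i ∧ p i ≤ q i ∧ q i ≤ b)
    (hno : ∀ i ∈ s, ∀ j ∈ s, i ≠ j → q i ≤ p j ∨ q j ≤ p i)
    (hω : ∀ i ∈ s, |ω i| ≤ δ) :
    dist (∑ i ∈ s, ω i • (f (q i) - f (p i))) 0 ≤ 2 * δ * L := by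
  classical
  set v : ι → X := fun i => f (q i) - f (p i) with hv
  set sp := s.filter (fun i => 0 ≤ ω i) with hsp
  set sm := s.filter (fun i => ¬ 0 ≤ ω i) with hsm
  have hsplit : ∑ i ∈ s, ω i • v i = (∑ i ∈ sp, ω i • v i) + (∑ i ∈ sm, ω i • v i) :=
    (Finset.sum_filter_add_sum_filter_not s _ _).symm
  have hplus : dist (∑ i ∈ sp, ω i • v i) 0 ≤ δ * L := by
    have hkey : ∑ i ∈ sp, ω i • v i = δ • ∑ i ∈ sp, (ω i / δ) • v i := by
      rw [Finset.smul_sum]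
      refine Finset.sum_congr rfl fun i _ => ?_
      rw [smul_smul, mul_div_cancel₀ _ (ne_of_gt hδ0)]
    rw [hkey]
    have hB : dist (∑ i ∈ sp, (ω i / δ) • v i) 0 ≤ L := by
      refine lemB hinv hscale L hL0 v sp (fun i => ω i / δ) ?_ ?_
      · intro t ht
        have hts : t ⊆ s := ht.trans (Finset.filter_subset _ _)
        exact lemC0 hL t p q (fun i hi => hpq i (hts hi))
          (fun i hi j hj hij => hno i (hts hi) j (hts hj) hij)
      · intro i hi
        have his : i ∈ s := Finset.mem_of_mem_filter _ hi
        have h0 : 0 ≤ ω i := (Finset.mem_filter.mp hi).2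
        constructor
        · exact div_nonneg h0 hδ0.le
        · rw [div_le_one hδ0]
          exact (abs_le.mp (hω i his)).2
    calc dist (δ • ∑ i ∈ sp, (ω i / δ) • v i) 0
        ≤ δ * dist (∑ i ∈ sp, (ω i / δ) • v i) 0 := N_smul_le hscale hδ0.le hδ1 _
      _ ≤ δ * L := mul_le_mul_of_nonneg_left hB hδ0.le
  have hminus : dist (∑ i ∈ sm, ω i • v i) 0 ≤ δ * L := by
    set v' : ι → X := fun i => f (p i) - f (q i) with hv'
    have hvv' : ∀ i, v' i = - v i := fun i => by rw [hv', hv]; exact (neg_sub _ _).symm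
    have hkey : ∑ i ∈ sm, ω i • v i = δ • ∑ i ∈ sm, ((-ω i) / δ) • v' i := by
      rw [Finset.smul_sum]
      refine Finset.sum_congr rfl fun i _ => ?_
      rw [smul_smul, mul_div_cancel₀ _ (ne_of_gt hδ0), hvv' i, smul_neg, neg_smul, neg_neg]
    rw [hkey]
    have hB : dist (∑ i ∈ sm, ((-ω i) / δ) • v' i) 0 ≤ L := by
      refine lemB hinv hscale L hL0 v' sm (fun i => (-ω i) / δ) ?_ ?_
      · intro t ht
        have hts : t ⊆ s := ht.trans (Finset.filter_subset _ _)
        have : ∑ i ∈ t, v' i = -(∑ i ∈ t, v i) := by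
          rw [← Finset.sum_neg_distrib]
          exact Finset.sum_congr rfl fun i _ => hvv' i
        rw [this, N_neg hinv]
        exact lemC0 hL t p q (fun i hi => hpq i (hts hi))
          (fun i hi j hj hij => hno i (hts hi) j (hts hj) hij)
      · intro i hi
        have his : i ∈ s := Finset.mem_of_mem_filter _ hi
        have h0 : ω i < 0 := lt_of_not_ge (Finset.mem_filter.mp hi).2
        constructor
        · exact div_nonneg (by linarith) hδ0.le
        · rw [div_le_one hδ0]
          have := (abs_le.mp (hω i his)).1
          linarith
    calc dist (δ • ∑ i ∈ sm, ((-ω i) / δ) • v' i) 0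
        ≤ δ * dist (∑ i ∈ sm, ((-ω i) / δ) • v' i) 0 := N_smul_le hscale hδ0.le hδ1 _
      _ ≤ δ * L := mul_le_mul_of_nonneg_left hB hδ0.le
  rw [hsplit]
  calc dist ((∑ i ∈ sp, ω i • v i) + (∑ i ∈ sm, ω i • v i)) 0
      ≤ dist (∑ i ∈ sp, ω i • v i) 0 + dist (∑ i ∈ sm, ω i • v i) 0 := N_add_le hinv _ _
    _ ≤ δ * L + δ * L := add_le_add hplus hminus
    _ = 2 * δ * L := by ring

end IntervalBound

namespace TaggedPartition
variable {a b : ℝ} (P : TaggedPartition a b)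

lemma t_mono_le {i j : ℕ} (hij : i ≤ j) (hj : j ≤ P.n) : P.t i ≤ P.t j := by
  induction j with
  | zero => simp_all
  | succ k ih =>
    rcases Nat.lt_or_ge i (k+1) with h | h
    · have hik : i ≤ k := by omega
      have := ih hik (by omega)
      have h2 := P.mono k (by omega)
      linarith
    · have : i = k + 1 := by omega
      rw [this]

lemma t_lt {i j : ℕ} (hij : i < j) (hj : j ≤ P.n) : P.t i < P.t j := by
  have h1 : P.t i ≤ P.t (j - 1) := P.t_mono_le (by omega) (by omega)
  have h2 : P.t (j - 1) < P.t ((j-1) + 1) := P.mono (j-1) (by omega)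
  have : (j - 1) + 1 = j := by omega
  rw [this] at h2
  linarith

lemma a_le_t {i : ℕ} (hi : i ≤ P.n) : a ≤ P.t i := by
  have := P.t_mono_le (Nat.zero_le i) hi
  rwa [P.left] at this

lemma t_le_b {i : ℕ} (hi : i ≤ P.n) : P.t i ≤ b := by
  have := P.t_mono_le hi le_rfl
  rwa [P.right] at this

lemma a_le_s {i : ℕ} (hi : i < P.n) : a ≤ P.s i :=
  le_trans (P.a_le_t (le_of_lt hi)) (P.tag_mem i hi).1

lemma s_le_b {i : ℕ} (hi : i < P.n) : P.s i ≤ b :=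
  le_trans (P.tag_mem i hi).2 (P.t_le_b hi)

lemma s_mono {i j : ℕ} (hij : i ≤ j) (hi : i < P.n) (hj : j < P.n) : P.s i ≤ P.s j := by
  rcases eq_or_lt_of_le hij with rfl | h
  · exact le_rfl
  · calc P.s i ≤ P.t (i+1) := (P.tag_mem i hi).2
      _ ≤ P.t j := P.t_mono_le (by omega) (by omega)
      _ ≤ P.s j := (P.tag_mem j hj).1

lemma t_inj {i j : ℕ} (hi : i ≤ P.n) (hj : j ≤ P.n) (h : P.t i = P.t j) : i = j := by
  rcases Nat.lt_trichotomy i j with hlt | heq | hgt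
  · exact absurd h (ne_of_lt (P.t_lt hlt hj))
  · exact heq
  · exact absurd h.symm (ne_of_lt (P.t_lt hgt hi))

end TaggedPartition

section Refinement
variable {X : Type*} [MetricSpace X] [AddCommGroup X] [Module ℝ X]

lemma tele {M : Type*} [AddCommGroup M] (F : ℕ → M) {u v : ℕ} (h : u ≤ v) :
    ∑ k ∈ Finset.Ico u v, (F (k + 1) - F k) = F v - F u := by
  rw [Finset.sum_Ico_eq_sub _ h, Finset.sum_range_sub, Finset.sum_range_sub]
  abel

/-- Core estimate: if `R` refines `P` and `P` has mesh `< δ < 1`, then the Riemann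
sums differ by at most `4δL`. -/
lemma lemD (hinv : ∀ x y z : X, dist (x + z) (y + z) = dist x y)
    (hscale : ∀ l : ℝ, 0 ≤ l → l < 1 → ∀ x y : X, dist (l • x) (l • y) ≤ l * dist x y)
    {a b : ℝ} {f : ℝ → X} {L : ℝ} (hL0 : 0 ≤ L)
    (hL : ∀ (m : ℕ) (c d : Fin m → ℝ),
      (∀ i, a ≤ c i ∧ c i < d i ∧ d i ≤ b) →
      (∀ i j, i ≠ j → d i ≤ c j ∨ d j ≤ c i) →
      dist 0 (∑ i, (f (d i) - f (c i))) ≤ L)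
    {δ : ℝ} (hδ0 : 0 < δ) (hδ1 : δ < 1)
    (P R : TaggedPartition a b) (href : P.points ⊆ R.points) (hmesh : P.MeshLT δ) :
    dist (riemannSum f P) (riemannSum f R) ≤ 4 * δ * L := by
  classical
  set φ : ℕ → ℕ := fun k => Nat.findGreatest (fun i => P.t i ≤ R.t k) P.n with hφdef
  set ψ : ℕ → ℕ := fun i => Nat.findGreatest (fun k => R.t k ≤ P.t i) R.n with hψdef
  have hψle : ∀ i, ψ i ≤ R.n := fun i => Nat.findGreatest_le _
  have hψt : ∀ i ≤ P.n, R.t (ψ i) = P.t i := by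
    intro i hi
    obtain ⟨k, hk, hkt⟩ := href ⟨i, hi, rfl⟩
    have h1 : k ≤ ψ i := Nat.le_findGreatest hk (le_of_eq hkt)
    have h2 : R.t (ψ i) ≤ P.t i := by
      have := Nat.findGreatest_spec (P := fun k => R.t k ≤ P.t i) hk (le_of_eq hkt)
      exact this
    have h3 : R.t k ≤ R.t (ψ i) := R.t_mono_le h1 (hψle i)
    rw [hkt] at h3
    exact le_antisymm h2 h3
  have hψmono : ∀ i j, i < j → j ≤ P.n → ψ i < ψ j := by
    intro i j hij hj
    by_contra h
    push_neg at h
    have h2 := R.t_mono_le h (hψle i)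
    rw [hψt i (by omega), hψt j hj] at h2
    exact absurd h2 (not_le.mpr (P.t_lt hij hj))
  have hφle : ∀ k, φ k ≤ P.n := fun k => Nat.findGreatest_le _
  have hφ1 : ∀ k ≤ R.n, P.t (φ k) ≤ R.t k := by
    intro k hk
    have : (fun i => P.t i ≤ R.t k) (Nat.findGreatest (fun i => P.t i ≤ R.t k) P.n) :=
      Nat.findGreatest_spec (P := fun i => P.t i ≤ R.t k) (Nat.zero_le P.n)
        (show P.t 0 ≤ R.t k by rw [P.left]; exact R.a_le_t hk)
    exact this
  have hφlt : ∀ k < R.n, φ k < P.n := by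
    intro k hk
    by_contra h
    have hEq : φ k = P.n := by have := hφle k; omega
    have h1 := hφ1 k hk.le
    rw [hEq, P.right] at h1
    have h2 : R.t k < b := by
      conv_rhs => rw [← R.right]
      exact R.t_lt hk le_rfl
    linarith
  have hφ2 : ∀ k < R.n, R.t k < P.t (φ k + 1) := by
    intro k hk
    have h := Nat.findGreatest_is_greatest (P := fun i => P.t i ≤ R.t k)
      (lt_add_one (φ k)) (by have := hφlt k hk; omega)
    exact not_le.mp h
  have claimA : ∀ k < R.n, ∀ i < P.n, (φ k = i ↔ ψ i ≤ k ∧ k < ψ (i + 1)) := by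
    intro k hk i hi
    constructor
    · rintro rfl
      constructor
      · by_contra h
        push_neg at h
        have h2 : R.t k < R.t (ψ (φ k)) := R.t_lt h (hψle _)
        rw [hψt _ (le_of_lt hi)] at h2
        exact absurd (hφ1 k hk.le) (not_le.mpr h2)
      · by_contra h
        push_neg at h
        have h2 : R.t (ψ (φ k + 1)) ≤ R.t k := R.t_mono_le h hk.le
        rw [hψt _ (by omega : φ k + 1 ≤ P.n)] at h2
        exact absurd h2 (not_le.mpr (hφ2 k hk))
    · rintro ⟨h1, h2⟩
      have hA : P.t i ≤ R.t k := by
        rw [← hψt i hi.le]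
        exact R.t_mono_le h1 hk.le
      have hle : i ≤ φ k := Nat.le_findGreatest hi.le hA
      have hB : R.t k < P.t (i + 1) := by
        rw [← hψt (i + 1) (by omega)]
        exact R.t_lt h2 (hψle _)
      by_contra hne
      have hgt : i + 1 ≤ φ k := by omega
      have h3 := hφ1 k hk.le
      have h4 : P.t (i + 1) ≤ P.t (φ k) := P.t_mono_le hgt (hφle k)
      linarith
  have hfiber : ∀ i < P.n,
      (Finset.range R.n).filter (fun k => φ k = i) = Finset.Ico (ψ i) (ψ (i + 1)) := by
    intro i hi
    ext k
    simp only [Finset.mem_filter, Finset.mem_range, Finset.mem_Ico]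
    constructor
    · rintro ⟨hk, hφk⟩
      exact (claimA k hk i hi).mp hφk
    · rintro ⟨h1, h2⟩
      have hk : k < R.n := lt_of_lt_of_le h2 (hψle _)
      exact ⟨hk, (claimA k hk i hi).mpr ⟨h1, h2⟩⟩
  have lemR : ∀ g : ℕ → X,
      ∑ k ∈ Finset.range R.n, (R.t (k + 1) - R.t k) • g (φ k)
        = ∑ i ∈ Finset.range P.n, (P.t (i + 1) - P.t i) • g i := by
    intro g
    rw [← Finset.sum_fiberwise_of_maps_to
      (fun k hk => Finset.mem_range.mpr (hφlt k (Finset.mem_range.mp hk)))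
      (fun k => (R.t (k + 1) - R.t k) • g (φ k))]
    refine Finset.sum_congr rfl fun i hi => ?_
    have hi' := Finset.mem_range.mp hi
    have hcg : ∀ k ∈ (Finset.range R.n).filter (fun k => φ k = i),
        (R.t (k + 1) - R.t k) • g (φ k) = (R.t (k + 1) - R.t k) • g i := by
      intro k hk
      rw [(Finset.mem_filter.mp hk).2]
    rw [Finset.sum_congr rfl hcg, hfiber i hi', ← Finset.sum_smul,
      tele R.t (le_of_lt (hψmono i (i + 1) (lt_add_one i) (by omega))),
      hψt i hi'.le, hψt (i + 1) (by omega)]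
  -- block-membership facts for tags
  have hψblock : ∀ i < P.n, ψ i < R.n ∧ R.t (ψ i) = P.t i ∧ R.t (ψ i + 1) ≤ P.t (i + 1) := by
    intro i hi
    have h1 : ψ i < ψ (i + 1) := hψmono i (i + 1) (lt_add_one i) (by omega)
    have h2 : ψ i < R.n := lt_of_lt_of_le h1 (hψle _)
    refine ⟨h2, hψt i hi.le, ?_⟩
    calc R.t (ψ i + 1) ≤ R.t (ψ (i + 1)) := R.t_mono_le (by omega) (hψle _)
      _ = P.t (i + 1) := hψt (i + 1) (by omega)
  -- the two sums
  set e : ℕ → X := fun j => f (R.s (j + 1)) - f (R.s j) with hedef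
  set c : ℕ → ℝ := fun j => P.t (φ j + 1) - R.t (j + 1) with hcdef
  set TermA : X := ∑ i ∈ Finset.range P.n,
      (P.t (i + 1) - P.t i) • (f (P.s i) - f (R.s (ψ i))) with hTA
  set TermB : X := ∑ j ∈ Finset.range R.n, c j • e j with hTB
  have hmain : riemannSum f P - riemannSum f R = TermA - TermB := by
    have stepA : riemannSum f P
        = ∑ k ∈ Finset.range R.n, (R.t (k + 1) - R.t k) • f (P.s (φ k)) :=
      (lemR (fun i => f (P.s i))).symm
    have step2 : riemannSum f P - riemannSum f R
        = ∑ k ∈ Finset.range R.n, (R.t (k + 1) - R.t k) • (f (P.s (φ k)) - f (R.s k)) := by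
      rw [stepA]
      unfold riemannSum
      rw [← Finset.sum_sub_distrib]
      exact Finset.sum_congr rfl fun k _ => (smul_sub _ _ _).symm
    have step3 : ∀ k < R.n, f (P.s (φ k)) - f (R.s k)
        = (f (P.s (φ k)) - f (R.s (ψ (φ k)))) - (f (R.s k) - f (R.s (ψ (φ k)))) := by
      intro k _
      abel
    rw [step2]
    have step4 : ∑ k ∈ Finset.range R.n, (R.t (k + 1) - R.t k) • (f (P.s (φ k)) - f (R.s k))
        = (∑ k ∈ Finset.range R.n,
            (R.t (k + 1) - R.t k) • (f (P.s (φ k)) - f (R.s (ψ (φ k)))))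
          - ∑ k ∈ Finset.range R.n,
            (R.t (k + 1) - R.t k) • (f (R.s k) - f (R.s (ψ (φ k)))) := by
      rw [← Finset.sum_sub_distrib]
      refine Finset.sum_congr rfl fun k hk => ?_
      rw [step3 k (Finset.mem_range.mp hk), smul_sub]
    rw [step4]
    congr 1
    · exact lemR (fun i => f (P.s i) - f (R.s (ψ i)))
    · -- Term B computation
      have hexp : ∀ k ∈ Finset.range R.n,
          (R.t (k + 1) - R.t k) • (f (R.s k) - f (R.s (ψ (φ k))))
            = ∑ j ∈ Finset.Ico (ψ (φ k)) k, (R.t (k + 1) - R.t k) • e j := by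
        intro k hk
        have hk' := Finset.mem_range.mp hk
        have hψφ : ψ (φ k) ≤ k := ((claimA k hk' (φ k) (hφlt k hk')).mp rfl).1
        rw [← Finset.smul_sum, tele (fun j => f (R.s j)) hψφ]
      rw [Finset.sum_congr rfl hexp]
      have hswap : ∀ (k j : ℕ),
          (k ∈ Finset.range R.n ∧ j ∈ Finset.Ico (ψ (φ k)) k)
            ↔ (k ∈ Finset.Ico (j + 1) (ψ (φ j + 1)) ∧ j ∈ Finset.range R.n) := by
        intro k j
        simp only [Finset.mem_range, Finset.mem_Ico]
        constructor
        · rintro ⟨hk, h1, h2⟩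
          have hj : j < R.n := by omega
          have hφk : φ k < P.n := hφlt k hk
          have hkblock := (claimA k hk (φ k) hφk).mp rfl
          have hφj : φ j = φ k := (claimA j hj (φ k) hφk).mpr ⟨h1, lt_trans h2 hkblock.2⟩
          exact ⟨⟨by omega, by rw [hφj]; exact hkblock.2⟩, hj⟩
        · rintro ⟨⟨h1, h2⟩, hj⟩
          have hφj : φ j < P.n := hφlt j hj
          have hk : k < R.n := lt_of_lt_of_le h2 (hψle _)
          have hjblock := (claimA j hj (φ j) hφj).mp rfl
          have hφk : φ k = φ j := (claimA k hk (φ j) hφj).mpr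
            ⟨le_trans hjblock.1 (by omega), h2⟩
          refine ⟨hk, ?_, by omega⟩
          rw [hφk]
          exact hjblock.1
      rw [Finset.sum_comm' hswap]
      refine Finset.sum_congr rfl fun j hj => ?_
      have hj' := Finset.mem_range.mp hj
      have hjlt : j < ψ (φ j + 1) := ((claimA j hj' (φ j) (hφlt j hj')).mp rfl).2
      rw [← Finset.sum_smul, tele R.t (by omega : j + 1 ≤ ψ (φ j + 1)),
        hψt (φ j + 1) (by have := hφlt j hj'; omega)]
  -- bound TermA
  have hA_bound : dist TermA 0 ≤ 2 * δ * L := by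
    set pA : ℕ → ℝ := fun i => min (P.s i) (R.s (ψ i)) with hpA
    set qA : ℕ → ℝ := fun i => max (P.s i) (R.s (ψ i)) with hqA
    set ωA : ℕ → ℝ := fun i =>
      if R.s (ψ i) ≤ P.s i then P.t (i + 1) - P.t i else -(P.t (i + 1) - P.t i) with hωA
    have hRtag : ∀ i < P.n, P.t i ≤ R.s (ψ i) ∧ R.s (ψ i) ≤ P.t (i + 1) := by
      intro i hi
      obtain ⟨h1, h2, h3⟩ := hψblock i hi
      have := R.tag_mem (ψ i) h1
      exact ⟨h2 ▸ this.1, le_trans this.2 h3⟩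
    have heq : TermA = ∑ i ∈ Finset.range P.n, ωA i • (f (qA i) - f (pA i)) := by
      rw [hTA]
      refine Finset.sum_congr rfl fun i _ => ?_
      by_cases h : R.s (ψ i) ≤ P.s i
      · rw [hωA, hpA, hqA]
        simp only [if_pos h, max_eq_left h, min_eq_right h]
      · push_neg at h
        rw [hωA, hpA, hqA]
        simp only [if_neg (not_le.mpr h), max_eq_right h.le, min_eq_left h.le]
        rw [neg_smul, ← smul_neg, neg_sub]
    rw [heq]
    refine lemC hinv hscale hL0 hL (Finset.range P.n) pA qA ωA hδ0 hδ1 ?_ ?_ ?_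
    · intro i hi
      have hi' := Finset.mem_range.mp hi
      have h1 := P.tag_mem i hi'
      have h2 := hRtag i hi'
      refine ⟨?_, min_le_max, ?_⟩
      · rw [hpA]
        have : P.t i ≤ min (P.s i) (R.s (ψ i)) := le_min h1.1 h2.1
        exact le_trans (P.a_le_t (le_of_lt hi')) this
      · rw [hqA]
        have : max (P.s i) (R.s (ψ i)) ≤ P.t (i + 1) := max_le h1.2 h2.2
        exact le_trans this (P.t_le_b (by omega))
    · intro i hi j hj hij
      have hi' := Finset.mem_range.mp hi
      have hj' := Finset.mem_range.mp hj
      have key : ∀ u v, u < v → v < P.n → qA u ≤ pA v := by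
        intro u v huv hv
        have h1 : qA u ≤ P.t (u + 1) := max_le (P.tag_mem u (by omega)).2 (hRtag u (by omega)).2
        have h2 : P.t v ≤ pA v := le_min (P.tag_mem v hv).1 (hRtag v hv).1
        have h3 : P.t (u + 1) ≤ P.t v := P.t_mono_le (by omega) (by omega)
        linarith
      rcases lt_or_gt_of_ne hij with h | h
      · exact Or.inl (key i j h hj')
      · exact Or.inr (key j i h hi')
    · intro i hi
      have hi' := Finset.mem_range.mp hi
      have hW : 0 ≤ P.t (i + 1) - P.t i := by
        have := P.mono i hi'
        linarith
      have hWδ := hmesh i hi'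
      by_cases h : R.s (ψ i) ≤ P.s i
      · simp only [hωA, if_pos h]
        rw [abs_of_nonneg hW]; linarith
      · simp only [hωA, if_neg h]
        rw [abs_neg, abs_of_nonneg hW]; linarith
  -- bound TermB
  have hB_bound : dist TermB 0 ≤ 2 * δ * L := by
    have hm1 : R.n - 1 + 1 = R.n := by have := R.npos; omega
    have hlast : c (R.n - 1) = 0 := by
      rw [hcdef]
      have hk : R.n - 1 < R.n := by omega
      have h2 : R.n - 1 < ψ (φ (R.n - 1) + 1) :=
        ((claimA _ hk (φ (R.n - 1)) (hφlt _ hk)).mp rfl).2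
      have h3 : ψ (φ (R.n - 1) + 1) = R.n := by
        have := hψle (φ (R.n - 1) + 1)
        omega
      have h4 : P.t (φ (R.n - 1) + 1) = R.t (R.n - 1 + 1) := by
        rw [← hψt (φ (R.n - 1) + 1) (by have := hφlt _ hk; omega), h3, hm1]
      simp [h4]
    have hTB' : TermB = ∑ j ∈ Finset.range (R.n - 1), c j • e j := by
      rw [hTB, ← hm1, Finset.sum_range_succ, hm1, hlast, zero_smul, add_zero]
    rw [hTB']
    refine lemC hinv hscale hL0 hL (Finset.range (R.n - 1))
      (fun j => R.s j) (fun j => R.s (j + 1)) c hδ0 hδ1 ?_ ?_ ?_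
    · intro j hj
      have hj' := Finset.mem_range.mp hj
      have hjn : j < R.n := by omega
      have hj1n : j + 1 < R.n := by omega
      exact ⟨R.a_le_s hjn, R.s_mono (by omega) hjn hj1n, R.s_le_b hj1n⟩
    · intro i hi j hj hij
      have hi' := Finset.mem_range.mp hi
      have hj' := Finset.mem_range.mp hj
      have key : ∀ u v, u < v → v < R.n - 1 → R.s (u + 1) ≤ R.s v := by
        intro u v huv hv
        exact R.s_mono (by omega) (by omega) (by omega)
      rcases lt_or_gt_of_ne hij with h | h
      · exact Or.inl (key i j h hj')
      · exact Or.inr (key j i h hi')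
    · intro j hj
      have hj' : j < R.n := by have := Finset.mem_range.mp hj; omega
      have hφj : φ j < P.n := hφlt j hj'
      have hjlt : j < ψ (φ j + 1) := ((claimA j hj' (φ j) hφj).mp rfl).2
      have h0 : 0 ≤ c j := by
        rw [hcdef]
        have h1 : R.t (j + 1) ≤ R.t (ψ (φ j + 1)) := R.t_mono_le (by omega) (hψle _)
        rw [hψt (φ j + 1) (by omega)] at h1
        simp only []
        linarith
      have h1 : c j ≤ δ := by
        rw [hcdef]
        have h2 : P.t (φ j) ≤ R.t j := hφ1 j hj'.le
        have h3 : R.t j ≤ R.t (j + 1) := R.t_mono_le (by omega) (by omega)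
        have h4 := hmesh (φ j) hφj
        simp only []
        linarith
      rw [abs_of_nonneg h0]
      exact h1
  -- combine
  rw [N_dist_eq hinv, hmain]
  calc dist (TermA - TermB) 0 ≤ dist TermA 0 + dist TermB 0 := N_sub_le hinv _ _
    _ ≤ 2 * δ * L + 2 * δ * L := add_le_add hA_bound hB_bound
    _ = 4 * δ * L := by ring

end Refinement

section Construction
variable {a b : ℝ}

lemma meshLT_mono {P : TaggedPartition a b} {δ δ' : ℝ} (h : P.MeshLT δ) (hδ : δ ≤ δ') :
    P.MeshLT δ' := fun i hi => lt_of_lt_of_le (h i hi) hδ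

lemma exists_common_refinement (hab : a < b) (P Q : TaggedPartition a b) :
    ∃ R : TaggedPartition a b, P.points ⊆ R.points ∧ Q.points ⊆ R.points := by
  classical
  set F : Finset ℝ :=
    ((Finset.range (P.n + 1)).image P.t) ∪ ((Finset.range (Q.n + 1)).image Q.t) with hF
  have haF : a ∈ F := Finset.mem_union_left _
    (Finset.mem_image.mpr ⟨0, Finset.mem_range.mpr (by omega), P.left⟩)
  have hbF : b ∈ F := Finset.mem_union_left _
    (Finset.mem_image.mpr ⟨P.n, Finset.mem_range.mpr (by omega), P.right⟩)
  have hFab : ∀ z ∈ F, a ≤ z ∧ z ≤ b := by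
    intro z hz
    rcases Finset.mem_union.mp hz with h | h
    · obtain ⟨i, hi, rfl⟩ := Finset.mem_image.mp h
      have hi' : i ≤ P.n := by have := Finset.mem_range.mp hi; omega
      exact ⟨P.a_le_t hi', P.t_le_b hi'⟩
    · obtain ⟨i, hi, rfl⟩ := Finset.mem_image.mp h
      have hi' : i ≤ Q.n := by have := Finset.mem_range.mp hi; omega
      exact ⟨Q.a_le_t hi', Q.t_le_b hi'⟩
  set l : List ℝ := F.sort (· ≤ ·) with hl
  have hsort : l.Pairwise (· < ·) := F.sortedLT_sort.pairwise
  have hlen : l.length = F.card := Finset.length_sort _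
  have hmeml : ∀ z : ℝ, z ∈ l ↔ z ∈ F := fun z => Finset.mem_sort _
  have hcard2 : 2 ≤ l.length := by
    rw [hlen]
    have : 1 < F.card := Finset.one_lt_card.mpr ⟨a, haF, b, hbF, ne_of_lt hab⟩
    omega
  set n : ℕ := l.length - 1 with hn
  have hnlen : n + 1 = l.length := by omega
  set tf : ℕ → ℝ := fun i => l.getD i b with htf
  have hget : ∀ i (h : i < l.length), tf i = l.get ⟨i, h⟩ := by
    intro i h
    show l.getD i b = l.get ⟨i, h⟩
    rw [List.getD_eq_getElem l b h, List.get_eq_getElem]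
  have hmono : ∀ i < n, tf i < tf (i + 1) := by
    intro i hi
    rw [hget i (by omega), hget (i + 1) (by omega)]
    exact hsort.rel_get_of_lt (by simp [Fin.lt_def])
  have htf_mem : ∀ i < l.length, tf i ∈ F := by
    intro i hi
    rw [hget i hi]
    exact (hmeml _).mp (l.get_mem ⟨i, hi⟩)
  have hleft : tf 0 = a := by
    obtain ⟨j, hj⟩ := List.mem_iff_get.mp ((hmeml a).mpr haF)
    rcases Nat.eq_zero_or_pos j.val with h0 | h0
    · rw [hget 0 (by omega)]
      refine Eq.trans ?_ hj
      congr 1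
      exact (Fin.ext h0.symm)
    · exfalso
      have h1 : l.get ⟨0, by omega⟩ < l.get j := hsort.rel_get_of_lt (by simp [Fin.lt_def, h0])
      rw [hj] at h1
      have h2 := (hFab _ (htf_mem 0 (by omega))).1
      rw [hget 0 (by omega)] at h2
      linarith
  have hright : tf n = b := by
    obtain ⟨j, hj⟩ := List.mem_iff_get.mp ((hmeml b).mpr hbF)
    have hjn : j.val ≤ n := by have := j.2; omega
    rcases eq_or_lt_of_le hjn with h0 | h0
    · rw [hget n (by omega)]; refine Eq.trans ?_ hj
      congr 1
      exact (Fin.ext h0.symm)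
    · exfalso
      have h1 : l.get j < l.get ⟨n, by omega⟩ := hsort.rel_get_of_lt (by simp [Fin.lt_def, h0])
      rw [hj] at h1
      have h2 := (hFab _ (htf_mem n (by omega))).2
      rw [hget n (by omega)] at h2
      linarith
  refine ⟨⟨n, tf, tf, by omega, hleft, hright, hmono,
    fun i hi => ⟨le_rfl, le_of_lt (hmono i hi)⟩⟩, ?_, ?_⟩
  · rintro z ⟨i, hi, rfl⟩
    obtain ⟨j, hj⟩ := List.mem_iff_get.mp ((hmeml (P.t i)).mpr
      (Finset.mem_union_left _ (Finset.mem_image.mpr ⟨i, Finset.mem_range.mpr (by omega), rfl⟩)))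
    refine ⟨j.val, ?_, ?_⟩
    · show (j : ℕ) ≤ n
      have := j.2; omega
    · show tf j.val = P.t i
      rw [hget j.val j.2]; exact hj
  · rintro z ⟨i, hi, rfl⟩
    obtain ⟨j, hj⟩ := List.mem_iff_get.mp ((hmeml (Q.t i)).mpr
      (Finset.mem_union_right _ (Finset.mem_image.mpr ⟨i, Finset.mem_range.mpr (by omega), rfl⟩)))
    refine ⟨j.val, ?_, ?_⟩
    · show (j : ℕ) ≤ n
      have := j.2; omega
    · show tf j.val = Q.t i
      rw [hget j.val j.2]; exact hj

lemma exists_meshLT (hab : a < b) {δ : ℝ} (hδ : 0 < δ) :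
    ∃ P : TaggedPartition a b, P.MeshLT δ := by
  obtain ⟨m, hm⟩ := exists_nat_gt ((b - a) / δ)
  have hba : 0 < b - a := by linarith
  have hm0 : 0 < m := by
    have h1 : 0 < (b - a) / δ := div_pos hba hδ
    exact_mod_cast lt_trans h1 hm
  have hmp : (0:ℝ) < m := by exact_mod_cast hm0
  set tf : ℕ → ℝ := fun i => a + (b - a) * i / m with htf
  have hstep : ∀ i : ℕ, tf (i + 1) - tf i = (b - a) / m := by
    intro i
    rw [htf]
    push_cast
    ring
  have hmono : ∀ i < m, tf i < tf (i + 1) := by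
    intro i _
    have h1 : 0 < tf (i + 1) - tf i := by
      rw [hstep i]
      exact div_pos hba hmp
    linarith
  have hmesh : (b - a) / m < δ := by
    rw [div_lt_iff₀ hmp]
    rw [div_lt_iff₀ hδ] at hm
    linarith
  refine ⟨⟨m, tf, tf, hm0, by simp [htf], ?_, hmono,
    fun i hi => ⟨le_rfl, le_of_lt (hmono i hi)⟩⟩, ?_⟩
  · rw [htf]
    field_simp
    ring
  · intro i _
    rw [hstep i]
    exact hmesh

end Construction

/-- the bounded-variation-type condition over nonoverlapping
subintervals implies Riemann integrability. -/
theorem riemannIntegrable_of_bounded_sums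
    {X : Type*} [MetricSpace X] [AddCommGroup X] [Module ℝ X] [CompleteSpace X]
    (hinv : ∀ x y z : X, dist (x + z) (y + z) = dist x y)
    (hscale : ∀ l : ℝ, 0 ≤ l → l < 1 → ∀ x y : X, dist (l • x) (l • y) ≤ l * dist x y)
    (a b : ℝ) (hab : a < b) (f : ℝ → X) (L : ℝ)
    (hL : ∀ (m : ℕ) (c d : Fin m → ℝ),
      (∀ i, a ≤ c i ∧ c i < d i ∧ d i ≤ b) →
      (∀ i j, i ≠ j → d i ≤ c j ∨ d j ≤ c i) →
      dist 0 (∑ i, (f (d i) - f (c i))) ≤ L) :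
    ∃ x, HasRiemannIntegral f a b x := by

  classical
  have hL0 : 0 ≤ L := by
    have := hL 0 (fun i => i.elim0) (fun i => i.elim0) (fun i => i.elim0)
      (fun i j _ => i.elim0)
    simpa using this
  -- two partitions of mesh < δ < 1 have close Riemann sums
  have hcomp : ∀ δ : ℝ, 0 < δ → δ < 1 → ∀ P Q : TaggedPartition a b,
      P.MeshLT δ → Q.MeshLT δ →
      dist (riemannSum f P) (riemannSum f Q) ≤ 8 * δ * L := by
    intro δ h0 h1 P Q hP hQ
    obtain ⟨R, hRP, hRQ⟩ := exists_common_refinement hab P Q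
    have d1 := lemD hinv hscale hL0 hL h0 h1 P R hRP hP
    have d2 := lemD hinv hscale hL0 hL h0 h1 Q R hRQ hQ
    calc dist (riemannSum f P) (riemannSum f Q)
        ≤ dist (riemannSum f P) (riemannSum f R)
          + dist (riemannSum f R) (riemannSum f Q) := dist_triangle _ _ _
      _ ≤ 4 * δ * L + 4 * δ * L := add_le_add d1 (by rw [dist_comm]; exact d2)
      _ = 8 * δ * L := by ring
  -- sequence of partitions with mesh → 0
  set ε : ℕ → ℝ := fun j => 1 / (j + 2) with hεdef
  have hεpos : ∀ j, 0 < ε j := by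
    intro j
    apply div_pos one_pos
    positivity
  have hεlt1 : ∀ j, ε j < 1 := by
    intro j
    rw [hεdef]
    rw [div_lt_one (by positivity)]
    have : (0:ℝ) ≤ (j:ℝ) := Nat.cast_nonneg j
    linarith
  have hεmono : ∀ j k, j ≤ k → ε k ≤ ε j := by
    intro j k hjk
    apply div_le_div_of_nonneg_left one_pos.le (by positivity)
    have : (j:ℝ) ≤ (k:ℝ) := Nat.cast_le.mpr hjk
    linarith
  have hex : ∀ j : ℕ, ∃ P : TaggedPartition a b, P.MeshLT (ε j) :=
    fun j => exists_meshLT hab (hεpos j)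
  choose Pseq hPseq using hex
  set z : ℕ → X := fun j => riemannSum f (Pseq j) with hz
  have hzdist : ∀ J j k, J ≤ j → J ≤ k → dist (z j) (z k) ≤ 8 * ε J * L := by
    intro J j k hj hk
    exact hcomp (ε J) (hεpos J) (hεlt1 J) (Pseq j) (Pseq k)
      (meshLT_mono (hPseq j) (hεmono J j hj)) (meshLT_mono (hPseq k) (hεmono J k hk))
  have hcauchy : CauchySeq z := by
    rw [Metric.cauchySeq_iff]
    intro εp hεp
    obtain ⟨J, hJ⟩ := exists_nat_gt (8 * L / εp)
    refine ⟨J, fun j hj k hk => ?_⟩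
    have h1 := hzdist J j k hj hk
    have h2 : 8 * ε J * L < εp := by
      rw [hεdef]
      rw [div_lt_iff₀ hεp] at hJ
      have hJ2 : (0:ℝ) < (J:ℝ) + 2 := by positivity
      rw [show (8:ℝ) * (1 / ((J:ℝ) + 2)) * L = 8 * L / ((J:ℝ) + 2) by ring,
        div_lt_iff₀ hJ2]
      nlinarith
    exact lt_of_le_of_lt h1 h2
  obtain ⟨x, hx⟩ := cauchySeq_tendsto_of_complete hcauchy
  refine ⟨x, ?_⟩
  intro εp hεp
  set δ : ℝ := min (1/2) (εp / (32 * (L + 1))) with hδdef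
  have hδ0 : 0 < δ := lt_min (by norm_num) (by positivity)
  have hδ1 : δ < 1 := lt_of_le_of_lt (min_le_left _ _) (by norm_num)
  have hδL : 8 * δ * L ≤ εp / 4 := by
    have h1 : δ ≤ εp / (32 * (L + 1)) := min_le_right _ _
    have h2 : 8 * δ * L ≤ 8 * (εp / (32 * (L + 1))) * L := by
      apply mul_le_mul_of_nonneg_right _ hL0
      linarith
    have hL1 : (0:ℝ) < L + 1 := by linarith
    have h4 : 8 * (εp / (32 * (L + 1))) * L = εp / 4 * (L / (L + 1)) := by
      field_simp
      ring
    have h5 : L / (L + 1) ≤ 1 := by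
      rw [div_le_one hL1]; linarith
    have h6 : εp / 4 * (L / (L + 1)) ≤ εp / 4 * 1 :=
      mul_le_mul_of_nonneg_left h5 (by positivity)
    rw [h4] at h2
    rw [mul_one] at h6
    linarith
  refine ⟨δ, hδ0, ?_⟩
  intro P hP
  -- pick j with ε j < δ and z j close to x
  obtain ⟨N, hN⟩ := Metric.tendsto_atTop.mp hx (εp / 2) (by positivity)
  obtain ⟨j0, hj0⟩ := exists_nat_gt (1 / δ)
  set j := max N j0 with hj
  have hεj : ε j < δ := by
    have h1 : ε j ≤ ε j0 := hεmono j0 j (le_max_right _ _)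
    have h2 : ε j0 < δ := by
      rw [hεdef]
      rw [div_lt_iff₀ hδ0] at hj0
      have hj02 : (0:ℝ) < (j0:ℝ) + 2 := by positivity
      rw [div_lt_iff₀ hj02]
      nlinarith [hδ0]
    linarith
  have hmeshj : (Pseq j).MeshLT δ := meshLT_mono (hPseq j) hεj.le
  have hcl : dist (z j) x < εp / 2 := hN j (le_max_left _ _)
  have hPz : dist (riemannSum f P) (z j) ≤ 8 * δ * L :=
    hcomp δ hδ0 hδ1 P (Pseq j) hP hmeshj
  calc dist (riemannSum f P) x ≤ dist (riemannSum f P) (z j) + dist (z j) x :=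
        dist_triangle _ _ _
    _ < 8 * δ * L + εp / 2 := by linarith
    _ ≤ εp / 4 + εp / 2 := by linarith
    _ < εp := by linarith
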